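/- arXiv:1705.07018 — 2 statements merged into one kernel-verified Lean document; each statement's English description precedes it below -/
import Mathlib

section
/- Let φ = (1+√5)/2, let k be a positive integer, and let s be a real number with 1 ≤ s < φ + 1 − 1/φ^{k−1}. Then (φ^k − 1)/s > (1 − 1/s)·φ^{k−1}. -/
theorem stmt_10 (k : ℕ) (hk : 1 ≤ k) (s : ℝ) (hs1 : 1 ≤ s)
    (hs2 : s < (1 + Real.sqrt 5) / 2 + 1 - 1 / ((1 + Real.sqrt 5) / 2) ^ (k - 1)) :
    (((1 + Real.sqrt 5) / 2) ^ k - 1) / s > (1 - 1 / s) * ((1 + Real.sqrt 5) / 2) ^ (k - 1) := by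
  set φ : ℝ := (1 + Real.sqrt 5) / 2 with hφdef
  have h5 : (1:ℝ) < Real.sqrt 5 := by
    rw [show (1:ℝ) = Real.sqrt 1 by simp]
    exact Real.sqrt_lt_sqrt (by norm_num) (by norm_num)
  have hφ : 1 < φ := by rw [hφdef]; linarith
  have hs0 : 0 < s := lt_of_lt_of_le one_pos hs1
  have hp : (0:ℝ) < φ ^ (k - 1) := pow_pos (by linarith) _
  have hk' : k - 1 + 1 = k := Nat.succ_pred_eq_of_pos hk
  have hkey : (s - 1) * φ ^ (k - 1) < φ ^ k - 1 := by
    have := (mul_lt_mul_of_pos_right hs2 hp)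
    have hne : φ ^ (k - 1) ≠ 0 := ne_of_gt hp
    have : s * φ ^ (k - 1) < (φ + 1) * φ ^ (k - 1) - 1 := by
      field_simp at this
      nlinarith [this]
    have hpow : φ * φ ^ (k - 1) = φ ^ k := by
      rw [← pow_succ']
      rw [hk']
    nlinarith
  rw [gt_iff_lt, lt_div_iff₀ hs0]
  have : (1 - 1 / s) * φ ^ (k - 1) * s = (s - 1) * φ ^ (k - 1) := by
    field_simp
  rw [this]; exact hkey
end

section
/- Let s, a, ℓ, ε be positive reals with 1 ≤ s < φ + 1 (φ the golden ratio) and ℓ > φ·a + 3sε. Then a/s + ℓ/s − ε > a + 2ε. -/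
theorem stmt_12 (s a ℓ ε : ℝ) (ha : 0 < a) (hℓ : 0 < ℓ) (hε : 0 < ε)
    (hs1 : 1 ≤ s) (hs2 : s < (1 + Real.sqrt 5) / 2 + 1)
    (h : ℓ > ((1 + Real.sqrt 5) / 2) * a + 3 * s * ε) :
    a / s + ℓ / s - ε > a + 2 * ε := by
  have hs : (0:ℝ) < s := lt_of_lt_of_le one_pos hs1
  have h5 : (2:ℝ) < Real.sqrt 5 := by
    nlinarith [Real.sq_sqrt (by norm_num : (5:ℝ) ≥ 0), Real.sqrt_nonneg 5]
  rw [gt_iff_lt, ← add_div, sub_eq_add_neg, ← sub_lt_iff_lt_add,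
    lt_div_iff₀ hs]
  nlinarith
end
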